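/- Let V be a finite-dimensional vector space over ℚ, and let (x₀⁽¹⁾; e⁽¹⁾), …, (x₀⁽ᵏ⁾; e⁽ᵏ⁾) be simple-sector data in V whose associated simple sectors are pairwise disjoint, with union Σ. If there exists a nonzero x ∈ V with Σ + x = Σ (i.e. the translate of Σ by x equals Σ), then ∑_{i=1}^{k} S(x₀⁽ⁱ⁾; e⁽ⁱ⁾) = 0 in the fraction field ℚ(V) of the group algebra ℚ[V]. -/

import Mathlib

/-- The group algebra `ℚ[V]` of a ℚ-vector space `V` is an integral domain
(it has no zero divisors since `V` has unique sums, being torsion-free). -/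
instance (V : Type*) [AddCommGroup V] [Module ℚ V] : IsDomain (AddMonoidAlgebra ℚ V) :=
  NoZeroDivisors.to_isDomain _

/-- The simple sector associated to a datum `(x₀; e₁, …, e_m)`:
the set `{x₀ + a₁e₁ + ⋯ + a_m e_m : aᵢ ∈ ℤ, aᵢ ≥ 0}`. -/
def simpleSector {V : Type*} [AddCommGroup V] [Module ℚ V] {m : ℕ}
    (x₀ : V) (e : Fin m → V) : Set V :=
  {y | ∃ a : Fin m → ℕ, y = x₀ + ∑ i, a i • e i}

/-- The element `S(x₀; e) = e^{x₀} / ∏ᵢ (1 − e^{eᵢ})` of the fraction field `ℚ(V)`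
of the group algebra `ℚ[V]` associated to a simple-sector datum `(x₀; e₁, …, e_m)`. -/
noncomputable def Sfrac {V : Type*} [AddCommGroup V] [Module ℚ V] {m : ℕ}
    (x₀ : V) (e : Fin m → V) : FractionRing (AddMonoidAlgebra ℚ V) :=
  algebraMap (AddMonoidAlgebra ℚ V) (FractionRing (AddMonoidAlgebra ℚ V))
      (AddMonoidAlgebra.single x₀ 1) /
    ∏ i, (1 - algebraMap (AddMonoidAlgebra ℚ V) (FractionRing (AddMonoidAlgebra ℚ V))
      (AddMonoidAlgebra.single (e i) 1))


open Finset
open scoped Classical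

section Aux

variable {V : Type*} [AddCommGroup V] [Module ℚ V]

lemma amg_single_neg (w : V) (q : ℚ) :
    AddMonoidAlgebra.single w (-q) = - AddMonoidAlgebra.single w q := by
  rw [eq_neg_iff_add_eq_zero, ← AddMonoidAlgebra.single_add]
  simp

lemma expand_prod {τ : Type*} [DecidableEq τ] (s : Finset τ) (g : τ → V) :
    ∏ t ∈ s, (1 - AddMonoidAlgebra.single (g t) (1:ℚ)) =
      ∑ B ∈ s.powerset, AddMonoidAlgebra.single (∑ t ∈ B, g t) ((-1:ℚ)^B.card) := by
  have h1 : ∀ t, (1 - AddMonoidAlgebra.single (g t) (1:ℚ))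
      = AddMonoidAlgebra.single (g t) (-1:ℚ) + 1 := by
    intro t
    rw [show ((-1:ℚ)) = -(1:ℚ) from rfl, amg_single_neg]
    ring
  simp_rw [h1]
  rw [Finset.prod_add]
  refine Finset.sum_congr rfl fun B _ => ?_
  rw [Finset.prod_const_one, mul_one, AddMonoidAlgebra.prod_single, Finset.prod_const]

lemma unique_rep {m : ℕ} {f : Fin m → V} (hf : LinearIndependent ℚ f)
    {a b : Fin m → ℕ} (h : ∑ j, a j • f j = ∑ j, b j • f j) : a = b := by
  have h' : ∑ j, ((a j : ℚ) - (b j : ℚ)) • f j = 0 := by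
    simp_rw [sub_smul, Finset.sum_sub_distrib, Nat.cast_smul_eq_nsmul]
    rw [h, sub_self]
  have := Fintype.linearIndependent_iff.mp hf _ h'
  funext j
  have hj := this j
  have : (a j : ℚ) = (b j : ℚ) := by linarith [hj]
  exact_mod_cast this

lemma lemmaI {m : ℕ} {f : Fin m → V} (hf : LinearIndependent ℚ f) (x₀ y : V) :
    ∑ C : Finset (Fin m),
        (if y - ∑ j ∈ C, f j ∈ simpleSector x₀ f then ((-1:ℚ))^C.card else 0) =
      if y = x₀ then 1 else 0 := by
  -- indicator sum for shifted membership
  have hshift : ∀ (C : Finset (Fin m)) (a : Fin m → ℕ),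
      (y - ∑ j ∈ C, f j = x₀ + ∑ j, a j • f j) ↔
        (y = x₀ + ∑ j, (a j + if j ∈ C then 1 else 0) • f j) := by
    intro C a
    rw [sub_eq_iff_eq_add]
    constructor
    · intro h
      rw [h]
      simp_rw [add_smul, Finset.sum_add_distrib, ite_smul, one_smul, zero_smul,
        Finset.sum_ite_mem, Finset.univ_inter]
      abel
    · intro h
      rw [h]
      simp_rw [add_smul, Finset.sum_add_distrib, ite_smul, one_smul, zero_smul,
        Finset.sum_ite_mem, Finset.univ_inter]
      abel
  by_cases hb : ∃ b : Fin m → ℕ, y = x₀ + ∑ j, b j • f j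
  · obtain ⟨b, hby⟩ := hb
    have huniq : ∀ b' : Fin m → ℕ, y = x₀ + ∑ j, b' j • f j → b' = b := by
      intro b' h'
      exact unique_rep hf (by
        have := h'.symm.trans hby
        exact add_left_cancel this)
    have hmem : ∀ C : Finset (Fin m),
        (y - ∑ j ∈ C, f j ∈ simpleSector x₀ f) ↔ ∀ j ∈ C, 1 ≤ b j := by
      intro C
      constructor
      · rintro ⟨a, ha⟩
        have : (fun j => a j + if j ∈ C then 1 else 0) = b :=
          huniq _ ((hshift C a).mp ha)
        intro j hj
        have := congrFun this j
        simp [hj] at this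
        omega
      · intro hC
        refine ⟨fun j => b j - if j ∈ C then 1 else 0, ?_⟩
        rw [hshift]
        have hpt : ∀ j, (b j - (if j ∈ C then 1 else 0)) + (if j ∈ C then 1 else 0) = b j := by
          intro j
          by_cases hj : j ∈ C
          · have := hC j hj; simp [hj]; omega
          · simp [hj]
        simp_rw [hpt]
        exact hby
    simp_rw [hmem]
    have hconv : ∀ C : Finset (Fin m),
        (if (∀ j ∈ C, 1 ≤ b j) then ((-1:ℚ))^C.card else 0)
          = if C ∈ (univ.filter (fun j => 1 ≤ b j)).powerset then ((-1:ℚ))^C.card else 0 := by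
      intro C
      congr 1
      simp [Finset.subset_iff]
    rw [show (∑ C : Finset (Fin m),
        (if (∀ j ∈ C, 1 ≤ b j) then ((-1:ℚ))^C.card else 0)) =
        ∑ C ∈ (univ.filter (fun j => 1 ≤ b j)).powerset, ((-1:ℚ))^C.card from by
      simp_rw [hconv]
      rw [← Finset.sum_filter, Finset.filter_mem_eq_inter, Finset.univ_inter]]
    have hz := Finset.sum_powerset_neg_one_pow_card
      (x := (univ.filter (fun j => 1 ≤ b j) : Finset (Fin m)))
    have hcast : (∑ C ∈ (univ.filter (fun j => 1 ≤ b j)).powerset, ((-1:ℚ))^C.card)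
        = ((∑ C ∈ (univ.filter (fun j => 1 ≤ b j)).powerset, ((-1:ℤ))^C.card : ℤ) : ℚ) := by
      push_cast
      rfl
    rw [hcast, hz]
    have hb0iff : (∀ j, b j = 0) ↔ y = x₀ := by
      constructor
      · intro h
        rw [hby]
        have : ∑ j, b j • f j = 0 := by
          rw [Finset.sum_eq_zero]
          intro j _
          rw [h j, zero_smul]
        rw [this, add_zero]
      · intro h
        have h0 : (0 : Fin m → ℕ) = b := huniq 0 (by rw [← h]; simp)
        intro j
        exact (congrFun h0 j).symm
    have hiff : (univ.filter (fun j => 1 ≤ b j) = (∅ : Finset (Fin m))) ↔ y = x₀ := by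
      rw [← hb0iff, Finset.eq_empty_iff_forall_notMem]
      constructor
      · intro h j
        have := h j
        simp at this
        omega
      · intro h j hj
        simp at hj
        rw [h j] at hj
        exact absurd hj (by norm_num)
    by_cases hyx : y = x₀
    · rw [if_pos hyx, if_pos (hiff.mpr hyx)]; norm_num
    · rw [if_neg hyx, if_neg (fun h => hyx (hiff.mp h))]; norm_num
  · have h1 : ∀ C : Finset (Fin m), y - ∑ j ∈ C, f j ∉ simpleSector x₀ f := by
      rintro C ⟨a, ha⟩
      exact hb ⟨_, (hshift C a).mp ha⟩
    rw [Finset.sum_eq_zero (fun C _ => if_neg (h1 C)),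
      if_neg (fun h : y = x₀ => hb ⟨0, by rw [h]; simp⟩)]

lemma sum_powerset_split {τ M : Type*} [DecidableEq τ] [AddCommMonoid M]
    {s t : Finset τ} (h : Disjoint s t) (F : Finset τ → M) :
    ∑ D ∈ (s ∪ t).powerset, F D = ∑ B ∈ s.powerset, ∑ C ∈ t.powerset, F (B ∪ C) := by
  rw [← Finset.sum_product']
  refine Finset.sum_nbij' (fun D => (D ∩ s, D ∩ t)) (fun p => p.1 ∪ p.2) ?_ ?_ ?_ ?_ ?_
  · intro D hD
    simp only [Finset.mem_product, Finset.mem_powerset]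
    exact ⟨Finset.inter_subset_right, Finset.inter_subset_right⟩
  · intro p hp
    simp only [Finset.mem_product, Finset.mem_powerset] at hp
    rw [Finset.mem_powerset]
    exact Finset.union_subset_union hp.1 hp.2
  · intro D hD
    rw [Finset.mem_powerset] at hD
    dsimp only
    rw [← Finset.inter_union_distrib_left, Finset.inter_eq_left.mpr hD]
  · intro p hp
    simp only [Finset.mem_product, Finset.mem_powerset] at hp
    have h1 : (p.1 ∪ p.2) ∩ s = p.1 := by
      rw [Finset.union_inter_distrib_right, Finset.inter_eq_left.mpr hp.1,
        Finset.disjoint_iff_inter_eq_empty.mp (h.symm.mono_left hp.2), Finset.union_empty]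
    have h2 : (p.1 ∪ p.2) ∩ t = p.2 := by
      rw [Finset.union_inter_distrib_right, Finset.inter_eq_left.mpr hp.2,
        Finset.disjoint_iff_inter_eq_empty.mp (h.mono_left hp.1), Finset.empty_union]
    exact Prod.ext h1 h2
  · intro D hD
    rw [Finset.mem_powerset] at hD
    dsimp only
    rw [← Finset.inter_union_distrib_left, Finset.inter_eq_left.mpr hD]

lemma sum_powerset_map {α β M : Type*} [DecidableEq α] [DecidableEq β] [AddCommMonoid M]
    (emb : α ↪ β) (u : Finset α) (F : Finset β → M) :
    ∑ C ∈ (u.map emb).powerset, F C = ∑ C ∈ u.powerset, F (C.map emb) := by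
  refine Finset.sum_nbij' (fun C => C.preimage emb emb.injective.injOn)
    (fun C => C.map emb) ?_ ?_ ?_ ?_ ?_
  · intro C hC
    rw [Finset.mem_powerset] at hC ⊢
    intro a ha
    rw [Finset.mem_preimage] at ha
    have := hC ha
    rwa [Finset.mem_map'] at this
  · intro C hC
    rw [Finset.mem_powerset] at hC ⊢
    exact Finset.map_subset_map.mpr hC
  · intro C hC
    rw [Finset.mem_powerset] at hC
    ext b
    simp only [Finset.mem_map, Finset.mem_preimage]
    constructor
    · rintro ⟨a, ha, rfl⟩; exact ha
    · intro hbC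
      obtain ⟨a, _, rfl⟩ := Finset.mem_map.mp (hC hbC)
      exact ⟨a, hbC, rfl⟩
  · intro C hC
    exact Finset.preimage_map emb C
  · intro C hC
    rw [Finset.mem_powerset] at hC
    congr 1
    ext b
    simp only [Finset.mem_map, Finset.mem_preimage]
    constructor
    · intro hbC
      obtain ⟨a, _, rfl⟩ := Finset.mem_map.mp (hC hbC)
      exact ⟨a, hbC, rfl⟩
    · rintro ⟨a, ha, rfl⟩; exact ha

lemma combaux {ι : Type*} [Fintype ι] [DecidableEq ι] (c : ι → ℚ) (x : ι → V) (n : ι → ℕ)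
    (e : ∀ i, Fin (n i) → V) (he : ∀ i, LinearIndependent ℚ (e i))
    (hrel : ∀ y : V, ∑ i, (if y ∈ simpleSector (x i) (e i) then c i else 0) = 0) (y : V) :
    ∑ i, ∑ B ∈ ((univ.erase i).sigma (fun i' => (univ : Finset (Fin (n i'))))).powerset,
      (if x i + (∑ t ∈ B, e t.1 t.2) = y then c i * (-1:ℚ)^B.card else 0) = 0 := by
  have hcond : ∀ (w z : V) (q : ℚ), (if w + z = y then q else 0)
      = q * (if y - z = w then 1 else 0) := by
    intro w z q
    by_cases h : w + z = y
    · rw [if_pos h, if_pos (by rw [← h]; abel), mul_one]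
    · rw [if_neg h, if_neg (fun hh => h (by rw [← hh]; abel)), mul_zero]
  set T := (i : ι) × Fin (n i) with hT
  have embinj : ∀ i : ι, Function.Injective (fun j => (⟨i, j⟩ : T)) := by
    intro i a b h
    simpa using h
  let emb : (i : ι) → (Fin (n i) ↪ T) := fun i => ⟨fun j => ⟨i, j⟩, embinj i⟩
  let off : ι → Finset T := fun i => (univ.erase i).sigma (fun i' => univ)
  let row : ι → Finset T := fun i => univ.map (emb i)
  have hdisj : ∀ i, Disjoint (off i) (row i) := by
    intro i
    rw [Finset.disjoint_left]
    intro t ht ht'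
    rw [Finset.mem_sigma] at ht
    obtain ⟨j, _, rfl⟩ := Finset.mem_map.mp ht'
    exact (Finset.mem_erase.mp ht.1).1 rfl
  have huniv : ∀ i, off i ∪ row i = univ := by
    intro i
    apply Finset.eq_univ_of_forall
    rintro ⟨i', j⟩
    rw [Finset.mem_union]
    by_cases h : i' = i
    · subst h
      exact Or.inr (Finset.mem_map.mpr ⟨j, Finset.mem_univ _, rfl⟩)
    · exact Or.inl (Finset.mem_sigma.mpr ⟨Finset.mem_erase.mpr ⟨h, Finset.mem_univ _⟩,
        Finset.mem_univ _⟩)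
  calc
    ∑ i, ∑ B ∈ (off i).powerset,
        (if x i + (∑ t ∈ B, e t.1 t.2) = y then c i * (-1:ℚ)^B.card else 0)
      = ∑ i, ∑ B ∈ (off i).powerset, (c i * (-1:ℚ)^B.card)
          * ∑ C : Finset (Fin (n i)),
            (if (y - ∑ t ∈ B, e t.1 t.2) - ∑ j ∈ C, e i j ∈ simpleSector (x i) (e i)
              then ((-1:ℚ))^C.card else 0) := by
        refine Finset.sum_congr rfl fun i _ => Finset.sum_congr rfl fun B _ => ?_
        rw [hcond, lemmaI (he i) (x i) (y - ∑ t ∈ B, e t.1 t.2)]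
    _ = ∑ i, ∑ B ∈ (off i).powerset, ∑ C ∈ (row i).powerset,
          (if y - ∑ t ∈ B ∪ C, e t.1 t.2 ∈ simpleSector (x i) (e i)
            then c i * ((-1:ℚ))^(B ∪ C).card else 0) := by
        refine Finset.sum_congr rfl fun i _ => Finset.sum_congr rfl fun B hB => ?_
        rw [Finset.mem_powerset] at hB
        have hps := sum_powerset_map (emb i) univ (fun C =>
          if y - ∑ t ∈ B ∪ C, e t.1 t.2 ∈ simpleSector (x i) (e i)
            then c i * ((-1:ℚ))^(B ∪ C).card else 0)
        rw [hps, Finset.powerset_univ, Finset.mul_sum]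
        refine Finset.sum_congr rfl fun C' _ => ?_
        have hCrow : C'.map (emb i) ⊆ row i := Finset.map_subset_map.mpr (Finset.subset_univ C')
        have hBC : Disjoint B (C'.map (emb i)) := (hdisj i).mono hB hCrow
        have hsum : ∑ t ∈ B ∪ C'.map (emb i), e t.1 t.2
            = (∑ t ∈ B, e t.1 t.2) + ∑ j ∈ C', e i j := by
          rw [Finset.sum_union hBC, Finset.sum_map]
          rfl
        have hcard : (B ∪ C'.map (emb i)).card = B.card + C'.card := by
          rw [Finset.card_union_of_disjoint hBC, Finset.card_map]
        rw [hsum, hcard, sub_sub, pow_add, mul_ite, mul_zero]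
        exact if_congr Iff.rfl (by ring) rfl
    _ = ∑ i, ∑ D ∈ (univ : Finset T).powerset,
          (if y - ∑ t ∈ D, e t.1 t.2 ∈ simpleSector (x i) (e i)
            then c i * ((-1:ℚ))^D.card else 0) := by
        refine Finset.sum_congr rfl fun i _ => ?_
        have hsp := sum_powerset_split (hdisj i) (fun D =>
          if y - ∑ t ∈ D, e t.1 t.2 ∈ simpleSector (x i) (e i)
            then c i * ((-1:ℚ))^D.card else 0)
        rw [huniv i] at hsp
        exact hsp.symm
    _ = ∑ D ∈ (univ : Finset T).powerset, ((-1:ℚ))^D.card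
          * ∑ i, (if y - ∑ t ∈ D, e t.1 t.2 ∈ simpleSector (x i) (e i) then c i else 0) := by
        rw [Finset.sum_comm]
        refine Finset.sum_congr rfl fun D _ => ?_
        rw [Finset.mul_sum]
        refine Finset.sum_congr rfl fun i _ => ?_
        rw [mul_ite, mul_zero, mul_comm]
    _ = 0 := by
        rw [Finset.sum_eq_zero]
        intro D _
        rw [hrel, mul_zero]

lemma keyR {ι : Type*} [Fintype ι] [DecidableEq ι] (c : ι → ℚ) (x : ι → V) (n : ι → ℕ)
    (e : ∀ i, Fin (n i) → V) (he : ∀ i, LinearIndependent ℚ (e i))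
    (hrel : ∀ y : V, ∑ i, (if y ∈ simpleSector (x i) (e i) then c i else 0) = 0) :
    ∑ i, (AddMonoidAlgebra.single (x i) (c i) *
      ∏ i' ∈ univ.erase i, ∏ j, (1 - AddMonoidAlgebra.single (e i' j) (1:ℚ))) = 0 := by
  have hstep : ∀ i : ι, (AddMonoidAlgebra.single (x i) (c i) *
      ∏ i' ∈ univ.erase i, ∏ j, (1 - AddMonoidAlgebra.single (e i' j) (1:ℚ)))
      = ∑ B ∈ ((univ.erase i).sigma (fun i' => (univ : Finset (Fin (n i'))))).powerset,
          AddMonoidAlgebra.single (x i + ∑ t ∈ B, e t.1 t.2) (c i * (-1:ℚ)^B.card) := by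
    intro i
    have hsig := Finset.prod_sigma (univ.erase i) (fun i' => (univ : Finset (Fin (n i'))))
      (fun t => 1 - AddMonoidAlgebra.single (e t.1 t.2) (1:ℚ))
    rw [← hsig, expand_prod, Finset.mul_sum]
    refine Finset.sum_congr rfl fun B _ => ?_
    rw [AddMonoidAlgebra.single_mul_single]
  simp_rw [hstep]
  apply AddMonoidAlgebra.ext
  ext y
  rw [AddMonoidAlgebra.coeff_zero, Finsupp.coe_zero, Pi.zero_apply, AddMonoidAlgebra.coeff_sum,
    Finset.sum_apply']
  have h1 : ∀ i : ι, (∑ B ∈ ((univ.erase i).sigma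
        (fun i' => (univ : Finset (Fin (n i'))))).powerset,
      AddMonoidAlgebra.single (x i + ∑ t ∈ B, e t.1 t.2) (c i * (-1:ℚ)^B.card)).coeff y
      = ∑ B ∈ ((univ.erase i).sigma (fun i' => (univ : Finset (Fin (n i'))))).powerset,
        (if x i + (∑ t ∈ B, e t.1 t.2) = y then c i * (-1:ℚ)^B.card else 0) := by
    intro i
    rw [AddMonoidAlgebra.coeff_sum, Finset.sum_apply']
    refine Finset.sum_congr rfl fun B _ => ?_
    rw [AddMonoidAlgebra.coeff_single]
    exact Finsupp.single_apply
  simp_rw [h1]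
  exact combaux c x n e he hrel y

lemma keyK {ι : Type*} [Fintype ι] [DecidableEq ι] (c : ι → ℚ) (x : ι → V) (n : ι → ℕ)
    (e : ∀ i, Fin (n i) → V) (he : ∀ i, LinearIndependent ℚ (e i))
    (hrel : ∀ y : V, ∑ i, (if y ∈ simpleSector (x i) (e i) then c i else 0) = 0) :
    ∑ i, (algebraMap (AddMonoidAlgebra ℚ V) (FractionRing (AddMonoidAlgebra ℚ V))
        (AddMonoidAlgebra.single (x i) (c i)) /
      ∏ j, (1 - algebraMap (AddMonoidAlgebra ℚ V) (FractionRing (AddMonoidAlgebra ℚ V))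
        (AddMonoidAlgebra.single (e i j) 1))) = 0 := by
  set R := AddMonoidAlgebra ℚ V
  set K := FractionRing R
  set alg := algebraMap R K with halg
  have hinj : Function.Injective alg := IsFractionRing.injective R K
  set d : ι → R := fun i => ∏ j, (1 - AddMonoidAlgebra.single (e i j) (1:ℚ)) with hd
  have hone : (1 : R) = AddMonoidAlgebra.single (0 : V) (1:ℚ) := AddMonoidAlgebra.one_def
  have hfac : ∀ (w : V), w ≠ 0 → (1 : R) - AddMonoidAlgebra.single w (1:ℚ) ≠ 0 := by
    intro w hw h
    apply hw
    have h1 : AddMonoidAlgebra.single w (1:ℚ) = AddMonoidAlgebra.single (0:V) (1:ℚ) := by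
      rw [← hone]
      linear_combination -h
    have := AddMonoidAlgebra.single_left_injective one_ne_zero h1
    exact this
  have hdne : ∀ i, d i ≠ 0 := by
    intro i
    rw [hd]
    apply Finset.prod_ne_zero_iff.mpr
    intro j _
    exact hfac (e i j) ((he i).ne_zero j)
  have hdalg : ∀ i, (∏ j, ((1:K) - alg (AddMonoidAlgebra.single (e i j) (1:ℚ)))) = alg (d i) := by
    intro i
    rw [hd, map_prod]
    refine Finset.prod_congr rfl fun j _ => ?_
    rw [map_sub, map_one]
  have hterm : ∀ i : ι, alg (AddMonoidAlgebra.single (x i) (c i)) / alg (d i)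
      = alg (AddMonoidAlgebra.single (x i) (c i) * ∏ i' ∈ univ.erase i, d i')
        / alg (∏ i', d i') := by
    intro i
    have herase : alg (∏ i' ∈ univ.erase i, d i') ≠ 0 := by
      rw [map_ne_zero_iff alg hinj]
      exact Finset.prod_ne_zero_iff.mpr (fun i' _ => hdne i')
    rw [map_mul, ← Finset.mul_prod_erase univ d (Finset.mem_univ i), map_mul]
    rw [mul_div_mul_right _ _ herase]
  calc ∑ i, (alg (AddMonoidAlgebra.single (x i) (c i)) /
      ∏ j, ((1:K) - alg (AddMonoidAlgebra.single (e i j) (1:ℚ))))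
      = ∑ i, alg (AddMonoidAlgebra.single (x i) (c i) * ∏ i' ∈ univ.erase i, d i')
          / alg (∏ i', d i') := by
        refine Finset.sum_congr rfl fun i _ => ?_
        rw [hdalg i, hterm i]
    _ = alg (∑ i, AddMonoidAlgebra.single (x i) (c i) * ∏ i' ∈ univ.erase i, d i')
          / alg (∏ i', d i') := by
        rw [← Finset.sum_div, map_sum]
    _ = 0 := by
        rw [show (∑ i, AddMonoidAlgebra.single (x i) (c i) * ∏ i' ∈ univ.erase i, d i') = 0
          from keyR c x n e he hrel, map_zero, zero_div]

omit [AddCommGroup V] [Module ℚ V] in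
lemma indic_sum {ι : Type*} [Fintype ι] (S : ι → Set V)
    (hd : ∀ i i', i ≠ i' → Disjoint (S i) (S i')) (y : V) :
    ∑ i, (if y ∈ S i then (1:ℚ) else 0) = if y ∈ ⋃ i, S i then 1 else 0 := by
  by_cases hy : y ∈ ⋃ i, S i
  · obtain ⟨i₀, hi₀⟩ := Set.mem_iUnion.mp hy
    rw [if_pos hy, Finset.sum_eq_single i₀]
    · rw [if_pos hi₀]
    · intro i _ hne
      exact if_neg (fun h => Set.disjoint_left.mp (hd i i₀ hne) h hi₀)
    · intro h
      exact absurd (Finset.mem_univ i₀) h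
  · rw [if_neg hy, Finset.sum_eq_zero]
    intro i _
    exact if_neg (fun h => hy (Set.mem_iUnion_of_mem i h))

end Aux

/-- If a finite pairwise-disjoint union `Σ` of simple sectors in a finite-dimensional
ℚ-vector space is invariant under translation by some nonzero vector `v`, then the
sum `∑ᵢ S(x₀⁽ⁱ⁾; e⁽ⁱ⁾)` vanishes in the fraction field `ℚ(V)` of `ℚ[V]`. -/
theorem Sfrac_sum_eq_zero_of_translation_invariant
    (V : Type*) [AddCommGroup V] [Module ℚ V] [FiniteDimensional ℚ V]
    (k : ℕ) (x : Fin k → V) (n : Fin k → ℕ) (e : (i : Fin k) → Fin (n i) → V)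
    (he : ∀ i, LinearIndependent ℚ (e i))
    (hd : ∀ i i', i ≠ i' → Disjoint (simpleSector (x i) (e i)) (simpleSector (x i') (e i')))
    (v : V) (hv : v ≠ 0)
    (htrans : (fun y => y + v) '' (⋃ i, simpleSector (x i) (e i)) =
      ⋃ i, simpleSector (x i) (e i)) :
    ∑ i, Sfrac (x i) (e i) = 0 := by
  classical
  set R := AddMonoidAlgebra ℚ V
  set K := FractionRing R
  set alg := algebraMap R K with halg
  have hinj : Function.Injective alg := IsFractionRing.injective R K
  -- the doubled family
  set ι := (Fin k) ⊕ (Fin k) with hι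
  let x' : ι → V := fun i => match i with | .inl a => x a | .inr a => x a + v
  let n' : ι → ℕ := fun i => match i with | .inl a => n a | .inr a => n a
  let e' : (i : ι) → Fin (n' i) → V := fun i => match i with | .inl a => e a | .inr a => e a
  let c : ι → ℚ := fun i => match i with | .inl _ => 1 | .inr _ => -1
  have he' : ∀ i, LinearIndependent ℚ (e' i) := by
    rintro (a | a) <;> exact he a
  -- membership in the translated sector
  have hmemtr : ∀ (a : Fin k) (y : V),
      y ∈ simpleSector (x a + v) (e a) ↔ y - v ∈ simpleSector (x a) (e a) := by
    intro a y
    constructor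
    · rintro ⟨w, hw⟩
      exact ⟨w, by rw [hw]; abel⟩
    · rintro ⟨w, hw⟩
      exact ⟨w, by rw [sub_eq_iff_eq_add] at hw; rw [hw]; abel⟩
  -- translated sectors are pairwise disjoint, and their union is the image
  have hd' : ∀ a a' : Fin k, a ≠ a' →
      Disjoint (simpleSector (x a + v) (e a)) (simpleSector (x a' + v) (e a')) := by
    intro a a' hne
    rw [Set.disjoint_left]
    intro y hy hy'
    exact Set.disjoint_left.mp (hd a a' hne) ((hmemtr a y).mp hy) ((hmemtr a' y).mp hy')
  have hun : (⋃ a, simpleSector (x a + v) (e a)) = ⋃ a, simpleSector (x a) (e a) := by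
    rw [← htrans]
    ext z
    simp only [Set.mem_iUnion, Set.mem_image]
    constructor
    · rintro ⟨a, ha⟩
      exact ⟨z - v, ⟨a, (hmemtr a z).mp ha⟩, by abel⟩
    · rintro ⟨w, ⟨a, ha⟩, rfl⟩
      refine ⟨a, (hmemtr a (w + v)).mpr ?_⟩
      simpa using ha
  -- the indicator relation
  have hrel : ∀ y : V, ∑ i, (if y ∈ simpleSector (x' i) (e' i) then c i else 0) = 0 := by
    intro y
    rw [Fintype.sum_sum_type]
    have h1 : ∑ a : Fin k, (if y ∈ simpleSector (x' (Sum.inl a)) (e' (Sum.inl a))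
        then c (Sum.inl a) else 0) = if y ∈ ⋃ a, simpleSector (x a) (e a) then 1 else 0 := by
      rw [← indic_sum _ hd y]
    have h2 : ∑ a : Fin k, (if y ∈ simpleSector (x' (Sum.inr a)) (e' (Sum.inr a))
        then c (Sum.inr a) else 0)
        = -(if y ∈ ⋃ a, simpleSector (x a + v) (e a) then 1 else 0) := by
      rw [← indic_sum _ hd' y, ← Finset.sum_neg_distrib]
      refine Finset.sum_congr rfl fun a _ => ?_
      show (if y ∈ simpleSector (x a + v) (e a) then (-1:ℚ) else 0) = _
      split_ifs <;> simp
    rw [h1, h2, hun]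
    ring
  have hzero := keyK c x' n' e' he' hrel
  rw [Fintype.sum_sum_type] at hzero
  have hSfl : ∀ a : Fin k,
      (alg (AddMonoidAlgebra.single (x' (Sum.inl a)) (c (Sum.inl a))) /
        ∏ j, (1 - alg (AddMonoidAlgebra.single (e' (Sum.inl a) j) 1)))
      = Sfrac (x a) (e a) := fun a => rfl
  have hSfr : ∀ a : Fin k,
      (alg (AddMonoidAlgebra.single (x' (Sum.inr a)) (c (Sum.inr a))) /
        ∏ j, (1 - alg (AddMonoidAlgebra.single (e' (Sum.inr a) j) 1)))
      = -(alg (AddMonoidAlgebra.single v 1) * Sfrac (x a) (e a)) := by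
    intro a
    show (alg (AddMonoidAlgebra.single (x a + v) (-1:ℚ)) /
        ∏ j, (1 - alg (AddMonoidAlgebra.single (e a j) 1))) = _
    rw [show AddMonoidAlgebra.single (x a + v) (-1:ℚ)
        = -(AddMonoidAlgebra.single v 1 * AddMonoidAlgebra.single (x a) 1) from by
      rw [AddMonoidAlgebra.single_mul_single, mul_one, amg_single_neg, add_comm]]
    rw [map_neg, map_mul, neg_div, Sfrac, mul_div_assoc]
  rw [← halg] at hzero
  simp_rw [hSfl, hSfr] at hzero
  rw [Finset.sum_neg_distrib, ← Finset.mul_sum] at hzero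
  -- now (1 - alg (single v 1)) * F = 0
  have hfactor : (1 - alg (AddMonoidAlgebra.single v (1:ℚ))) *
      (∑ a, Sfrac (x a) (e a)) = 0 := by
    linear_combination hzero
  have hne : (1 - alg (AddMonoidAlgebra.single v (1:ℚ))) ≠ 0 := by
    intro h
    apply hv
    have h1 : AddMonoidAlgebra.single v (1:ℚ) = (1 : R) := by
      apply hinj
      rw [map_one]
      linear_combination -h
    rw [AddMonoidAlgebra.one_def] at h1
    exact AddMonoidAlgebra.single_left_injective one_ne_zero h1
  rcases mul_eq_zero.mp hfactor with h | h
  · exact absurd h hne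
  · exact h
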